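/- In a Cayley doubling A = Q ⊕ Qℓ of a quaternion algebra Q with ℓ² = γ ∈ F^×, for c = a + bℓ with a, b ∈ Q and c invertible, and for E, G ∈ Q with E invertible: −(E⁻¹c⁻¹)(cG) = (−1/Norm(c))·(Norm(a)·E⁻¹G − γ·Norm(b)·GE⁻¹ + (b·(conj(G)·E⁻¹ − E⁻¹·conj(G))·conj(a))·ℓ). -/

import Mathlib

set_option maxHeartbeats 4000000
open Quaternion

/-- The norm form of a quaternion algebra `ℍ[F, c₁, c₂]` (with `i² = c₁`, `j² = c₂`). -/
def qnorm {F : Type*} [Field F] {c₁ c₂ : F} (z : ℍ[F, c₁, c₂]) : F :=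
  z.re ^ 2 - c₁ * z.imI ^ 2 - c₂ * z.imJ ^ 2 + c₁ * c₂ * z.imK ^ 2

/-- The multiplication of the Cayley doubling `A = Q ⊕ Qℓ` with `ℓ² = γ`:
`(q + rℓ)(s + tℓ) = qs + γ·conj(t)·r + (tq + r·conj(s))ℓ`. -/
def omul {F : Type*} [Field F] {c₁ c₂ : F} (γ : F)
    (x y : ℍ[F, c₁, c₂] × ℍ[F, c₁, c₂]) : ℍ[F, c₁, c₂] × ℍ[F, c₁, c₂] :=
  (x.1 * y.1 + γ • (star y.2 * x.2), y.2 * x.1 + x.2 * star y.1)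

theorem cayley_doubling_root_formula {F : Type*} [Field F] (c₁ c₂ γ : F) (hγ : γ ≠ 0)
    (a b E G : ℍ[F, c₁, c₂])
    (hc : qnorm a - γ * qnorm b ≠ 0) (hE : qnorm E ≠ 0) :
    -(omul γ (omul γ (((qnorm E)⁻¹ • star E : ℍ[F, c₁, c₂]), 0)
        ((qnorm a - γ * qnorm b)⁻¹ • ((star a : ℍ[F, c₁, c₂]), -b)))
      (omul γ (a, b) (G, 0)))
    = (-(qnorm a - γ * qnorm b)⁻¹) •
        (((qnorm a) • (((qnorm E)⁻¹ • star E) * G)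
            - (γ * qnorm b) • (G * ((qnorm E)⁻¹ • star E)) : ℍ[F, c₁, c₂]),
          (b * (star G * ((qnorm E)⁻¹ • star E) - ((qnorm E)⁻¹ • star E) * star G) * star a
            : ℍ[F, c₁, c₂])) := by
  generalize (qnorm E)⁻¹ = e
  generalize (qnorm a - γ * qnorm b)⁻¹ = n
  refine Prod.ext ?_ ?_ <;>
  · ext <;>
    · simp only [omul, qnorm, Prod.fst, Prod.snd, Prod.smul_mk, Prod.neg_mk,
        QuaternionAlgebra.re_mul, QuaternionAlgebra.imI_mul, QuaternionAlgebra.imJ_mul,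
        QuaternionAlgebra.imK_mul, QuaternionAlgebra.re_add, QuaternionAlgebra.imI_add,
        QuaternionAlgebra.imJ_add, QuaternionAlgebra.imK_add, QuaternionAlgebra.re_sub,
        QuaternionAlgebra.imI_sub, QuaternionAlgebra.imJ_sub, QuaternionAlgebra.imK_sub,
        QuaternionAlgebra.re_neg, QuaternionAlgebra.imI_neg, QuaternionAlgebra.imJ_neg,
        QuaternionAlgebra.imK_neg, QuaternionAlgebra.re_smul, QuaternionAlgebra.imI_smul,
        QuaternionAlgebra.imJ_smul, QuaternionAlgebra.imK_smul, QuaternionAlgebra.re_star,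
        QuaternionAlgebra.imI_star, QuaternionAlgebra.imJ_star, QuaternionAlgebra.imK_star,
        QuaternionAlgebra.re_zero, QuaternionAlgebra.imI_zero, QuaternionAlgebra.imJ_zero,
        QuaternionAlgebra.imK_zero, smul_eq_mul]
      ring
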